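/- Fix n ∈ ℕ and q ∈ (0,∞). Suppose that ‖·‖_U and ‖·‖_V are two norms on ℝ^n, with unit balls B_U and B_V, respectively. Then ((1/|B_U|)∫_{B_U} ‖u‖_V^q du)^{1/q} ≥ (n/(n+q))^{1/q}·(|B_U|/|B_V|)^{1/n}. -/

import Mathlib

open MeasureTheory Metric Set ENNReal
open Pointwise

noncomputable section

/-- `N` is a norm on the real vector space `V`. -/
def IsNorm {V : Type*} [AddCommGroup V] [Module ℝ V] (N : V → ℝ) : Prop :=
  (∀ x, N x = 0 → x = 0) ∧ (∀ (a : ℝ) (x : V), N (a • x) = |a| * N x) ∧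
    (∀ x y : V, N (x + y) ≤ N x + N y)

namespace VolLB

variable {V : Type*} [AddCommGroup V] [Module ℝ V] {N : V → ℝ}

lemma nzero (h : IsNorm N) : N 0 = 0 := by
  have := h.2.1 0 0; simpa using this

lemma nneg (h : IsNorm N) (x : V) : N (-x) = N x := by
  have := h.2.1 (-1) x; simpa using this

lemma nnonneg (h : IsNorm N) (x : V) : 0 ≤ N x := by
  have h2 := h.2.2 x (-x)
  rw [add_neg_cancel, nzero h, nneg h] at h2
  linarith

lemma nsum (h : IsNorm N) {ι : Type*} (s : Finset ι) (f : ι → V) :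
    N (∑ i ∈ s, f i) ≤ ∑ i ∈ s, N (f i) := by
  classical
  induction s using Finset.induction with
  | empty => simp [nzero h]
  | insert _ _ hx ih =>
      rw [Finset.sum_insert hx, Finset.sum_insert hx]
      exact le_trans (h.2.2 _ _) (by linarith)

variable {n : ℕ}

lemma coordle (x : EuclideanSpace ℝ (Fin n)) (i : Fin n) : |x i| ≤ ‖x‖ := by
  rw [EuclideanSpace.norm_eq, ← Real.sqrt_sq_eq_abs]
  apply Real.sqrt_le_sqrt
  have : |x i| ^ 2 ≤ ∑ j, ‖x j‖ ^ 2 := by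
    have := Finset.single_le_sum (f := fun j => ‖x j‖ ^ 2)
      (fun j _ => by positivity) (Finset.mem_univ i)
    simpa [Real.norm_eq_abs, sq_abs] using this
  simpa [sq_abs] using this

lemma exists_upper {N : EuclideanSpace ℝ (Fin n) → ℝ} (h : IsNorm N) :
    ∃ C > 0, ∀ x, N x ≤ C * ‖x‖ := by
  classical
  set e : Fin n → EuclideanSpace ℝ (Fin n) := fun i => EuclideanSpace.basisFun (Fin n) ℝ i
  refine ⟨(∑ i, N (e i)) + 1, ?_, ?_⟩
  · have : 0 ≤ ∑ i, N (e i) := Finset.sum_nonneg fun i _ => nnonneg h _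
    linarith
  · intro x
    have hx : ∑ i, x i • e i = x := by
      simpa [e, EuclideanSpace.basisFun_repr] using
        (EuclideanSpace.basisFun (Fin n) ℝ).sum_repr x
    calc N x = N (∑ i, x i • e i) := by rw [hx]
      _ ≤ ∑ i, N (x i • e i) := nsum h _ _
      _ = ∑ i, |x i| * N (e i) := by simp [h.2.1]
      _ ≤ ∑ i, ‖x‖ * N (e i) := Finset.sum_le_sum fun i _ =>
            mul_le_mul_of_nonneg_right (coordle x i) (nnonneg h _)
      _ = (∑ i, N (e i)) * ‖x‖ := by rw [← Finset.mul_sum, mul_comm]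
      _ ≤ ((∑ i, N (e i)) + 1) * ‖x‖ := by nlinarith [norm_nonneg x]

lemma cont_of_upper {N : EuclideanSpace ℝ (Fin n) → ℝ} (h : IsNorm N)
    {C : ℝ} (hC : 0 < C) (hub : ∀ x, N x ≤ C * ‖x‖) : Continuous N := by
  have lip : LipschitzWith C.toNNReal N := by
    apply LipschitzWith.of_dist_le_mul
    intro x y
    have h1 : N x - N y ≤ N (x - y) := by
      have := h.2.2 (x - y) y; simp at this; linarith
    have h2 : N y - N x ≤ N (x - y) := by
      have := h.2.2 (y - x) x
      simp at this
      have := nneg h (x - y)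
      simp [neg_sub] at this
      linarith
    have h3 : dist (N x) (N y) ≤ N (x - y) := by
      rw [Real.dist_eq, abs_sub_le_iff]; exact ⟨h1, h2⟩
    refine h3.trans ?_
    rw [Real.coe_toNNReal _ hC.le, dist_eq_norm]
    exact hub _
  exact lip.continuous

lemma exists_lower (hn : 0 < n) {N : EuclideanSpace ℝ (Fin n) → ℝ} (h : IsNorm N)
    (hcont : Continuous N) : ∃ m > 0, ∀ x, m * ‖x‖ ≤ N x := by
  haveI : Nonempty (Fin n) := ⟨⟨0, hn⟩⟩
  obtain ⟨x0, hx0, hmin⟩ := (isCompact_sphere (0 : EuclideanSpace ℝ (Fin n)) 1).exists_isMinOn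
    (NormedSpace.sphere_nonempty.mpr zero_le_one) hcont.continuousOn
  have hx0norm : ‖x0‖ = 1 := by simpa using mem_sphere_zero_iff_norm.mp hx0
  have hx0ne : x0 ≠ 0 := by intro hz; rw [hz] at hx0norm; simp at hx0norm
  have hm : 0 < N x0 := by
    rcases (nnonneg h x0).lt_or_eq with h1 | h1
    · exact h1
    · exact absurd (h.1 x0 h1.symm) hx0ne
  refine ⟨N x0, hm, fun x => ?_⟩
  rcases eq_or_ne x 0 with rfl | hx
  · simp [nzero h]
  · have hxn : (0:ℝ) < ‖x‖ := norm_pos_iff.mpr hx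
    have hy : (‖x‖⁻¹ • x) ∈ sphere (0 : EuclideanSpace ℝ (Fin n)) 1 := by
      simp [norm_smul, abs_of_pos (inv_pos.mpr hxn), inv_mul_cancel₀ hxn.ne']
    have := hmin hy
    have heq : N (‖x‖⁻¹ • x) = ‖x‖⁻¹ * N x := by
      rw [h.2.1, abs_of_pos (inv_pos.mpr hxn)]
    rw [isMinOn_iff] at hmin
    have h4 := hmin _ hy
    rw [heq] at h4
    calc N x0 * ‖x‖ ≤ (‖x‖⁻¹ * N x) * ‖x‖ := by nlinarith
      _ = N x := by field_simp

lemma ball_smul {N : EuclideanSpace ℝ (Fin n) → ℝ} (h : IsNorm N) {t : ℝ} (ht : 0 < t) :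
    {v : EuclideanSpace ℝ (Fin n) | N v ≤ t} = t • {v : EuclideanSpace ℝ (Fin n) | N v ≤ 1} := by
  ext v
  rw [mem_smul_set_iff_inv_smul_mem₀ ht.ne']
  simp only [mem_setOf_eq]
  rw [h.2.1, abs_inv, abs_of_pos ht]
  constructor
  · intro hv
    rw [inv_mul_le_iff₀ ht, mul_one]
    exact hv
  · intro hv
    rw [inv_mul_le_iff₀ ht, mul_one] at hv
    exact hv



lemma vol_ball_smul {N : EuclideanSpace ℝ (Fin n) → ℝ} (h : IsNorm N) {t : ℝ} (ht : 0 < t) :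
    volume {v : EuclideanSpace ℝ (Fin n) | N v ≤ t}
      = ENNReal.ofReal (t ^ n) * volume {v : EuclideanSpace ℝ (Fin n) | N v ≤ 1} := by
  rw [ball_smul h ht, Measure.addHaar_smul_of_nonneg volume ht.le,
    finrank_euclideanSpace_fin]

end VolLB

/-- **Lemma (volumetric lower bound).** For any two norms `‖·‖_U, ‖·‖_V` on `ℝⁿ`,
`(⨍_{B_U} ‖u‖_V^q du)^{1/q} ≥ (n/(n+q))^{1/q}·(|B_U|/|B_V|)^{1/n}`. -/
theorem statement16 (n : ℕ) (hn : 0 < n) (q : ℝ) (hq : 0 < q)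
    (NU NV : EuclideanSpace ℝ (Fin n) → ℝ) (hNU : IsNorm NU) (hNV : IsNorm NV) :
    ((volume {u : EuclideanSpace ℝ (Fin n) | NU u ≤ 1}).toReal
        / (volume {v : EuclideanSpace ℝ (Fin n) | NV v ≤ 1}).toReal) ^ ((1 : ℝ) / n)
      * ((n : ℝ) / ((n : ℝ) + q)) ^ (1 / q)
      ≤ (⨍ u in {u : EuclideanSpace ℝ (Fin n) | NU u ≤ 1}, NV u ^ q) ^ (1 / q) := by
  classical
  obtain ⟨CU, hCU, hCUle⟩ := VolLB.exists_upper hNU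
  obtain ⟨CV, hCV, hCVle⟩ := VolLB.exists_upper hNV
  have contU := VolLB.cont_of_upper hNU hCU hCUle
  have contV := VolLB.cont_of_upper hNV hCV hCVle
  obtain ⟨mU, hmU, hmUle⟩ := VolLB.exists_lower hn hNU contU
  obtain ⟨mV, hmV, hmVle⟩ := VolLB.exists_lower hn hNV contV
  set BU := {u : EuclideanSpace ℝ (Fin n) | NU u ≤ 1} with hBUdef
  set BV := {v : EuclideanSpace ℝ (Fin n) | NV v ≤ 1} with hBVdef
  have hBUclosed : IsClosed BU := isClosed_le contU continuous_const
  have hBVclosed : IsClosed BV := isClosed_le contV continuous_const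
  have hBUmeas := hBUclosed.measurableSet
  have hBVmeas := hBVclosed.measurableSet
  have aux_le_inv : ∀ {m x : ℝ}, 0 < m → m * x ≤ 1 → x ≤ m⁻¹ := by
    intro m x hm h
    have h2 := mul_le_mul_of_nonneg_left h (inv_pos.mpr hm).le
    rwa [← mul_assoc, inv_mul_cancel₀ hm.ne', one_mul, mul_one] at h2
  have hBUsub : BU ⊆ closedBall 0 mU⁻¹ := fun u hu => by
    rw [mem_closedBall_zero_iff]
    exact aux_le_inv hmU ((hmUle u).trans hu)
  have hBVsub : BV ⊆ closedBall 0 mV⁻¹ := fun u hu => by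
    rw [mem_closedBall_zero_iff]
    exact aux_le_inv hmV ((hmVle u).trans hu)
  have hBUsup : closedBall 0 CU⁻¹ ⊆ BU := fun u hu => by
    rw [mem_closedBall_zero_iff] at hu
    have := hCUle u
    have h2 : CU * ‖u‖ ≤ CU * CU⁻¹ := by gcongr
    rw [mul_inv_cancel₀ hCU.ne'] at h2
    exact le_trans this h2
  have hBVsup : closedBall 0 CV⁻¹ ⊆ BV := fun u hu => by
    rw [mem_closedBall_zero_iff] at hu
    have := hCVle u
    have h2 : CV * ‖u‖ ≤ CV * CV⁻¹ := by gcongr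
    rw [mul_inv_cancel₀ hCV.ne'] at h2
    exact le_trans this h2
  set a := volume BU with hadef
  set b := volume BV with hbdef
  have ha0 : 0 < a :=
    lt_of_lt_of_le (measure_closedBall_pos volume 0 (by positivity)) (measure_mono hBUsup)
  have hb0 : 0 < b :=
    lt_of_lt_of_le (measure_closedBall_pos volume 0 (by positivity)) (measure_mono hBVsup)
  have hat : a ≠ ⊤ := ((measure_mono hBUsub).trans_lt measure_closedBall_lt_top).ne
  have hbt : b ≠ ⊤ := ((measure_mono hBVsub).trans_lt measure_closedBall_lt_top).ne
  set A := a.toReal with hAdef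
  set B := b.toReal with hBdef
  have hA : 0 < A := ENNReal.toReal_pos ha0.ne' hat
  have hB : 0 < B := ENNReal.toReal_pos hb0.ne' hbt
  have hnR : (0:ℝ) < (n:ℝ) := by exact_mod_cast hn
  set s0 := (A / B) ^ ((1:ℝ)/n) with hs0def
  have hs0 : 0 < s0 := Real.rpow_pos_of_pos (by positivity) _
  have hs0n : s0 ^ (n : ℕ) = A / B := by
    rw [hs0def, ← Real.rpow_natCast (((A/B) ^ ((1:ℝ)/n))) n, ← Real.rpow_mul (by positivity)]
    rw [one_div, inv_mul_cancel₀ hnR.ne', Real.rpow_one]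
  -- compactness & integrability
  have hBUcpt : IsCompact BU :=
    Metric.isCompact_of_isClosed_isBounded hBUclosed (isBounded_closedBall.subset hBUsub)
  have hcontq : Continuous fun u => NV u ^ q := contV.rpow_const (fun u => Or.inr hq.le)
  have hInt : IntegrableOn (fun u => NV u ^ q) BU :=
    hcontq.continuousOn.integrableOn_compact hBUcpt
  set I := ∫ u in BU, NV u ^ q with hIdef
  have hI0 : 0 ≤ I :=
    setIntegral_nonneg hBUmeas fun u _ => Real.rpow_nonneg (VolLB.nnonneg hNV u) q
  -- layer cake
  have hlayer : ENNReal.ofReal I = ENNReal.ofReal q *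
      ∫⁻ t in Ioi (0:ℝ), (volume.restrict BU) {x | t < NV x} * ENNReal.ofReal (t ^ (q-1)) := by
    rw [hIdef, MeasureTheory.ofReal_integral_eq_lintegral_ofReal hInt
      (Filter.Eventually.of_forall fun u => Real.rpow_nonneg (VolLB.nnonneg hNV u) q),
      lintegral_rpow_eq_lintegral_meas_lt_mul (volume.restrict BU)
        (Filter.Eventually.of_forall fun u => VolLB.nnonneg hNV u) contV.aemeasurable hq]
  set g : ℝ → ℝ := fun t => A * t ^ (q-1) - B * t ^ ((n:ℝ) + q - 1) with hgdef
  have hAB : ∀ t ∈ Ioo (0:ℝ) s0, t ^ (n:ℕ) * B ≤ A := by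
    intro t ht
    have h1 : t ^ (n:ℕ) ≤ s0 ^ (n:ℕ) := pow_le_pow_left₀ ht.1.le ht.2.le n
    rw [hs0n] at h1
    calc t ^ (n:ℕ) * B ≤ (A/B) * B := by nlinarith
      _ = A := div_mul_cancel₀ A hB.ne'
  have hg_eq : ∀ t ∈ Ioo (0:ℝ) s0, g t = (A - t ^ (n:ℕ) * B) * t ^ (q-1) := by
    intro t ht
    have h2 : t ^ ((n:ℝ) + q - 1) = t ^ (n:ℕ) * t ^ (q-1) := by
      rw [← Real.rpow_natCast t n, ← Real.rpow_add ht.1]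
      ring_nf
    simp only [hgdef]
    rw [h2]; ring
  have hgnn : ∀ t ∈ Ioo (0:ℝ) s0, 0 ≤ g t := by
    intro t ht
    rw [hg_eq t ht]
    have := hAB t ht
    have h3 : (0:ℝ) ≤ t ^ (q-1) := Real.rpow_nonneg ht.1.le _
    nlinarith
  have hpt : ∀ t ∈ Ioo (0:ℝ) s0,
      ENNReal.ofReal (g t) ≤ (volume.restrict BU) {x | t < NV x} * ENNReal.ofReal (t ^ (q-1)) := by
    intro t ht
    have hDmeas : MeasurableSet ({x : EuclideanSpace ℝ (Fin n) | NV x ≤ t} ∩ BU) :=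
      ((isClosed_le contV continuous_const).measurableSet).inter hBUmeas
    have hres : (volume.restrict BU) {x | t < NV x}
        = volume ({x : EuclideanSpace ℝ (Fin n) | t < NV x} ∩ BU) :=
      Measure.restrict_apply (isOpen_lt continuous_const contV).measurableSet
    have hdiff : BU \ ({x : EuclideanSpace ℝ (Fin n) | NV x ≤ t} ∩ BU)
        = {x : EuclideanSpace ℝ (Fin n) | t < NV x} ∩ BU := by
      ext x
      simp only [mem_diff, mem_inter_iff, mem_setOf_eq, not_and, not_le]
      constructor
      · rintro ⟨hx, h2⟩
        exact ⟨not_le.mp (fun hle => h2 hle hx), hx⟩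
      · rintro ⟨h2, hx⟩
        exact ⟨hx, fun hle => absurd h2 (not_lt.mpr hle)⟩
    have hvol_le : volume ({x : EuclideanSpace ℝ (Fin n) | NV x ≤ t} ∩ BU)
        ≤ ENNReal.ofReal (t ^ (n:ℕ) * B) := by
      refine le_trans (measure_mono inter_subset_left) ?_
      rw [VolLB.vol_ball_smul hNV ht.1, ← hbdef, ENNReal.ofReal_mul (pow_nonneg ht.1.le n),
        ← ENNReal.ofReal_toReal hbt, ← hBdef]
    have hDfin : volume ({x : EuclideanSpace ℝ (Fin n) | NV x ≤ t} ∩ BU) ≠ ⊤ :=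
      ((measure_mono inter_subset_right).trans_lt hat.lt_top).ne
    have hmain : ENNReal.ofReal (A - t ^ (n:ℕ) * B) ≤ (volume.restrict BU) {x | t < NV x} := by
      rw [hres, ← hdiff, measure_diff inter_subset_right hDmeas.nullMeasurableSet hDfin]
      rw [ENNReal.ofReal_sub _ (mul_nonneg (pow_nonneg ht.1.le n) hB.le)]
      rw [hAdef, ENNReal.ofReal_toReal hat]
      exact tsub_le_tsub_left hvol_le a
    rw [hg_eq t ht, ENNReal.ofReal_mul (by linarith [hAB t ht])]
    exact mul_le_mul_left hmain _
  have hnq1 : (-1:ℝ) < (n:ℝ) + q - 1 := by linarith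
  have hi1 : IntervalIntegrable (fun t => t ^ (q-1)) volume 0 s0 :=
    intervalIntegral.intervalIntegrable_rpow' (by linarith)
  have hi2 : IntervalIntegrable (fun t : ℝ => t ^ ((n:ℝ)+q-1)) volume 0 s0 :=
    intervalIntegral.intervalIntegrable_rpow' hnq1
  have hgII : IntervalIntegrable g volume 0 s0 := by
    simpa [hgdef] using (hi1.const_mul A).sub (hi2.const_mul B)
  have hgInt : IntegrableOn g (Ioo 0 s0) := by
    have h1 := (intervalIntegrable_iff_integrableOn_Ioc_of_le hs0.le).mp hgII
    exact h1.mono_set Ioo_subset_Ioc_self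
  set J := ∫ t in Ioo (0:ℝ) s0, g t with hJdef
  have hJofReal : ∫⁻ t in Ioo (0:ℝ) s0, ENNReal.ofReal (g t) = ENNReal.ofReal J := by
    rw [hJdef, MeasureTheory.ofReal_integral_eq_lintegral_ofReal hgInt
      ((ae_restrict_iff' measurableSet_Ioo).mpr (Filter.Eventually.of_forall hgnn))]
  have hJval : J = A * (s0 ^ q / q) - B * (s0 ^ ((n:ℝ)+q) / ((n:ℝ)+q)) := by
    rw [hJdef, ← MeasureTheory.integral_Ioc_eq_integral_Ioo,
      ← intervalIntegral.integral_of_le hs0.le]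
    rw [hgdef]
    rw [intervalIntegral.integral_sub (hi1.const_mul A) (hi2.const_mul B),
        intervalIntegral.integral_const_mul, intervalIntegral.integral_const_mul,
        integral_rpow (Or.inl (by linarith : (-1:ℝ) < q - 1)), integral_rpow (Or.inl hnq1)]
    have e1 : q - 1 + 1 = q := by ring
    have e2 : (n:ℝ) + q - 1 + 1 = (n:ℝ) + q := by ring
    rw [e1, e2, Real.zero_rpow hq.ne', Real.zero_rpow (by linarith : (n:ℝ) + q ≠ 0)]
    ring
  have hchain : ENNReal.ofReal (q * J) ≤ ENNReal.ofReal I := by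
    rw [hlayer, ENNReal.ofReal_mul hq.le]
    refine mul_le_mul_right ?_ _
    calc ENNReal.ofReal J = ∫⁻ t in Ioo (0:ℝ) s0, ENNReal.ofReal (g t) := hJofReal.symm
      _ ≤ ∫⁻ t in Ioo (0:ℝ) s0,
            (volume.restrict BU) {x | t < NV x} * ENNReal.ofReal (t ^ (q-1)) :=
          lintegral_mono_ae ((ae_restrict_iff' measurableSet_Ioo).mpr
            (Filter.Eventually.of_forall hpt))
      _ ≤ ∫⁻ t in Ioi (0:ℝ),
            (volume.restrict BU) {x | t < NV x} * ENNReal.ofReal (t ^ (q-1)) :=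
          lintegral_mono_set Ioo_subset_Ioi_self
  have hnqpos : (0:ℝ) < (n:ℝ) + q := by linarith
  have hqJ : q * J = A * (s0 ^ q * ((n:ℝ)/((n:ℝ)+q))) := by
    rw [hJval]
    have h1 : s0 ^ ((n:ℝ)+q) = (A/B) * s0 ^ q := by
      rw [Real.rpow_add hs0, ← hs0n, Real.rpow_natCast]
    rw [h1]
    field_simp
    ring
  have hIlb : A * (s0 ^ q * ((n:ℝ)/((n:ℝ)+q))) ≤ I := by
    rw [← hqJ]
    exact (ENNReal.ofReal_le_ofReal_iff hI0).mp hchain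
  have havg : (⨍ u in BU, NV u ^ q) = A⁻¹ * I := by
    rw [setAverage_eq, smul_eq_mul, hIdef, hAdef, hadef]; rfl
  have havg_lb : s0 ^ q * ((n:ℝ)/((n:ℝ)+q)) ≤ ⨍ u in BU, NV u ^ q := by
    rw [havg]
    calc s0 ^ q * ((n:ℝ)/((n:ℝ)+q)) = A⁻¹ * (A * (s0 ^ q * ((n:ℝ)/((n:ℝ)+q)))) := by
          field_simp
      _ ≤ A⁻¹ * I := mul_le_mul_of_nonneg_left hIlb (inv_nonneg.mpr hA.le)
  have hfinal := Real.rpow_le_rpow (by positivity) havg_lb (by positivity : (0:ℝ) ≤ 1/q)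
  calc s0 * ((n:ℝ)/((n:ℝ)+q)) ^ (1/q)
      = (s0 ^ q * ((n:ℝ)/((n:ℝ)+q))) ^ (1/q) := by
        rw [Real.mul_rpow (Real.rpow_nonneg hs0.le q) (by positivity),
          ← Real.rpow_mul hs0.le, mul_one_div, div_self hq.ne', Real.rpow_one]
    _ ≤ (⨍ u in BU, NV u ^ q) ^ (1/q) := hfinal
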